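/- Let n ≥ 0, let Ψ be a set-valued sheaf on smooth n-manifolds with a topological enhancement over ℝⁿ, and let M be a smooth n-manifold. Given an open cover {Uᵢ} of M by affine patches together with chosen diffeomorphisms φᵢ : Uᵢ → Vᵢ onto open subsets Vᵢ ⊆ ℝⁿ, topologize each set Ψ(Uᵢ) by transporting the given topology on Ψ(Vᵢ) along the bijection φᵢ* : Ψ(Vᵢ) → Ψ(Uᵢ), and give Ψ(M) the initial (subspace) topology induced by the canonical injection Ψ(M) → ∏ᵢ Ψ(Uᵢ). Then the resulting topology on Ψ(M) is independent both of the choice of cover of M by affine patches and of the chosen diffeomorphisms φᵢ. (Lemma 3.4 of the paper: the topology on Ψ(M) is well defined.) -/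

import Mathlib

open scoped Manifold
open TopologicalSpace Set

noncomputable section

/-- A map `f : N → M` between smooth `n`-manifolds is an *open smooth embedding* if it is
injective and a smooth local diffeomorphism; equivalently, it is a topological open embedding
which is a diffeomorphism onto its open image. -/
def IsOpenSmoothEmbedding (n : ℕ)
    {N : Type} [TopologicalSpace N] [ChartedSpace (EuclideanSpace ℝ (Fin n)) N]
    {M : Type} [TopologicalSpace M] [ChartedSpace (EuclideanSpace ℝ (Fin n)) M]
    (f : N → M) : Prop :=
  Function.Injective f ∧ IsLocalDiffeomorph (𝓡 n) (𝓡 n) (⊤ : ℕ∞) f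

theorem IsOpenSmoothEmbedding.continuous {n : ℕ}
    {N : Type} [TopologicalSpace N] [ChartedSpace (EuclideanSpace ℝ (Fin n)) N]
    {M : Type} [TopologicalSpace M] [ChartedSpace (EuclideanSpace ℝ (Fin n)) M]
    {f : N → M} (hf : IsOpenSmoothEmbedding n f) : Continuous f :=
  hf.2.contMDiff.continuous

/-- A set-valued sheaf `Ψ` on the site of smooth `n`-manifolds (second countable, Hausdorff,
without boundary) and open smooth embeddings, presented in terms of its sections over the open
subsets of each smooth `n`-manifold.  `sect M U` is the set `Ψ(U)` of sections over the open
subset `U ⊆ M`; `res` is restriction to a smaller open subset, `pull` is pullback along an open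
smooth embedding of manifolds, and `pullD` is pullback along a (partial) diffeomorphism between
an open subset of one manifold and an open subset of another.  These operations are functorial
and satisfy the sheaf condition for arbitrary open covers. -/
structure SetSheaf (n : ℕ) : Type 1 where
  sect : ∀ (M : Type) [TopologicalSpace M] [ChartedSpace (EuclideanSpace ℝ (Fin n)) M]
      [IsManifold (𝓡 n) (⊤ : ℕ∞) M] [SecondCountableTopology M] [T2Space M],
      Opens M → Type
  res : ∀ (M : Type) [TopologicalSpace M] [ChartedSpace (EuclideanSpace ℝ (Fin n)) M]
      [IsManifold (𝓡 n) (⊤ : ℕ∞) M] [SecondCountableTopology M] [T2Space M]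
      {U V : Opens M}, V ≤ U → sect M U → sect M V
  res_id : ∀ (M : Type) [TopologicalSpace M] [ChartedSpace (EuclideanSpace ℝ (Fin n)) M]
      [IsManifold (𝓡 n) (⊤ : ℕ∞) M] [SecondCountableTopology M] [T2Space M]
      (U : Opens M) (s : sect M U), res M (le_refl U) s = s
  res_comp : ∀ (M : Type) [TopologicalSpace M] [ChartedSpace (EuclideanSpace ℝ (Fin n)) M]
      [IsManifold (𝓡 n) (⊤ : ℕ∞) M] [SecondCountableTopology M] [T2Space M]
      {U V W : Opens M} (hVU : V ≤ U) (hWV : W ≤ V) (s : sect M U),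
      res M hWV (res M hVU s) = res M (hWV.trans hVU) s
  pull : ∀ (N : Type) [TopologicalSpace N] [ChartedSpace (EuclideanSpace ℝ (Fin n)) N]
      [IsManifold (𝓡 n) (⊤ : ℕ∞) N] [SecondCountableTopology N] [T2Space N]
      (M : Type) [TopologicalSpace M] [ChartedSpace (EuclideanSpace ℝ (Fin n)) M]
      [IsManifold (𝓡 n) (⊤ : ℕ∞) M] [SecondCountableTopology M] [T2Space M]
      (f : N → M) (hf : IsOpenSmoothEmbedding n f) (U : Opens M),
      sect M U → sect N ⟨f ⁻¹' (U : Set M), U.isOpen.preimage hf.continuous⟩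
  pull_id : ∀ (M : Type) [TopologicalSpace M] [ChartedSpace (EuclideanSpace ℝ (Fin n)) M]
      [IsManifold (𝓡 n) (⊤ : ℕ∞) M] [SecondCountableTopology M] [T2Space M]
      (hid : IsOpenSmoothEmbedding n (id : M → M)) (U : Opens M) (s : sect M U),
      pull M M id hid U s = s
  pull_comp : ∀ (P : Type) [TopologicalSpace P] [ChartedSpace (EuclideanSpace ℝ (Fin n)) P]
      [IsManifold (𝓡 n) (⊤ : ℕ∞) P] [SecondCountableTopology P] [T2Space P]
      (N : Type) [TopologicalSpace N] [ChartedSpace (EuclideanSpace ℝ (Fin n)) N]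
      [IsManifold (𝓡 n) (⊤ : ℕ∞) N] [SecondCountableTopology N] [T2Space N]
      (M : Type) [TopologicalSpace M] [ChartedSpace (EuclideanSpace ℝ (Fin n)) M]
      [IsManifold (𝓡 n) (⊤ : ℕ∞) M] [SecondCountableTopology M] [T2Space M]
      (g : P → N) (f : N → M) (hg : IsOpenSmoothEmbedding n g)
      (hf : IsOpenSmoothEmbedding n f) (hfg : IsOpenSmoothEmbedding n (f ∘ g))
      (U : Opens M) (s : sect M U),
      pull P N g hg _ (pull N M f hf U s) = pull P M (f ∘ g) hfg U s
  pull_res : ∀ (N : Type) [TopologicalSpace N] [ChartedSpace (EuclideanSpace ℝ (Fin n)) N]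
      [IsManifold (𝓡 n) (⊤ : ℕ∞) N] [SecondCountableTopology N] [T2Space N]
      (M : Type) [TopologicalSpace M] [ChartedSpace (EuclideanSpace ℝ (Fin n)) M]
      [IsManifold (𝓡 n) (⊤ : ℕ∞) M] [SecondCountableTopology M] [T2Space M]
      (f : N → M) (hf : IsOpenSmoothEmbedding n f) {U V : Opens M} (h : V ≤ U)
      (s : sect M U),
      pull N M f hf V (res M h s)
        = res N (fun _ hx => h hx) (pull N M f hf U s)
  pullD : ∀ (N : Type) [TopologicalSpace N] [ChartedSpace (EuclideanSpace ℝ (Fin n)) N]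
      [IsManifold (𝓡 n) (⊤ : ℕ∞) N] [SecondCountableTopology N] [T2Space N]
      (M : Type) [TopologicalSpace M] [ChartedSpace (EuclideanSpace ℝ (Fin n)) M]
      [IsManifold (𝓡 n) (⊤ : ℕ∞) M] [SecondCountableTopology M] [T2Space M]
      (e : OpenPartialHomeomorph N M),
      ContMDiffOn (𝓡 n) (𝓡 n) (⊤ : ℕ∞) e e.source →
      ContMDiffOn (𝓡 n) (𝓡 n) (⊤ : ℕ∞) e.symm e.target →
      ∀ (V : Opens N) (U : Opens M), (V : Set N) ⊆ e.source → e '' (V : Set N) = (U : Set M) →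
      sect M U → sect N V
  pullD_refl : ∀ (M : Type) [TopologicalSpace M] [ChartedSpace (EuclideanSpace ℝ (Fin n)) M]
      [IsManifold (𝓡 n) (⊤ : ℕ∞) M] [SecondCountableTopology M] [T2Space M]
      (h₁ : ContMDiffOn (𝓡 n) (𝓡 n) (⊤ : ℕ∞) (OpenPartialHomeomorph.refl M) (OpenPartialHomeomorph.refl M).source)
      (h₂ : ContMDiffOn (𝓡 n) (𝓡 n) (⊤ : ℕ∞) (OpenPartialHomeomorph.refl M).symm (OpenPartialHomeomorph.refl M).target)
      (V : Opens M) (s : sect M V),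
      pullD M M (OpenPartialHomeomorph.refl M) h₁ h₂ V V (subset_univ _) (image_id _) s = s
  pullD_res : ∀ (N : Type) [TopologicalSpace N] [ChartedSpace (EuclideanSpace ℝ (Fin n)) N]
      [IsManifold (𝓡 n) (⊤ : ℕ∞) N] [SecondCountableTopology N] [T2Space N]
      (M : Type) [TopologicalSpace M] [ChartedSpace (EuclideanSpace ℝ (Fin n)) M]
      [IsManifold (𝓡 n) (⊤ : ℕ∞) M] [SecondCountableTopology M] [T2Space M]
      (e : OpenPartialHomeomorph N M)
      (h₁ : ContMDiffOn (𝓡 n) (𝓡 n) (⊤ : ℕ∞) e e.source)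
      (h₂ : ContMDiffOn (𝓡 n) (𝓡 n) (⊤ : ℕ∞) e.symm e.target)
      {V' V : Opens N} {U' U : Opens M} (hV : (V : Set N) ⊆ e.source)
      (hV' : (V' : Set N) ⊆ e.source)
      (hU : e '' (V : Set N) = (U : Set M)) (hU' : e '' (V' : Set N) = (U' : Set M))
      (hVV' : V' ≤ V) (hUU' : U' ≤ U) (s : sect M U),
      res N hVV' (pullD N M e h₁ h₂ V U hV hU s)
        = pullD N M e h₁ h₂ V' U' hV' hU' (res M hUU' s)
  pullD_trans : ∀ (P : Type) [TopologicalSpace P] [ChartedSpace (EuclideanSpace ℝ (Fin n)) P]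
      [IsManifold (𝓡 n) (⊤ : ℕ∞) P] [SecondCountableTopology P] [T2Space P]
      (N : Type) [TopologicalSpace N] [ChartedSpace (EuclideanSpace ℝ (Fin n)) N]
      [IsManifold (𝓡 n) (⊤ : ℕ∞) N] [SecondCountableTopology N] [T2Space N]
      (M : Type) [TopologicalSpace M] [ChartedSpace (EuclideanSpace ℝ (Fin n)) M]
      [IsManifold (𝓡 n) (⊤ : ℕ∞) M] [SecondCountableTopology M] [T2Space M]
      (e : OpenPartialHomeomorph P N) (f : OpenPartialHomeomorph N M)
      (he₁ : ContMDiffOn (𝓡 n) (𝓡 n) (⊤ : ℕ∞) e e.source)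
      (he₂ : ContMDiffOn (𝓡 n) (𝓡 n) (⊤ : ℕ∞) e.symm e.target)
      (hf₁ : ContMDiffOn (𝓡 n) (𝓡 n) (⊤ : ℕ∞) f f.source)
      (hf₂ : ContMDiffOn (𝓡 n) (𝓡 n) (⊤ : ℕ∞) f.symm f.target)
      (hef₁ : ContMDiffOn (𝓡 n) (𝓡 n) (⊤ : ℕ∞) (e.trans f) (e.trans f).source)
      (hef₂ : ContMDiffOn (𝓡 n) (𝓡 n) (⊤ : ℕ∞) (e.trans f).symm (e.trans f).target)
      (W : Opens P) (V : Opens N) (U : Opens M)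
      (hW : (W : Set P) ⊆ e.source) (hV : e '' (W : Set P) = (V : Set N))
      (hV' : (V : Set N) ⊆ f.source) (hU : f '' (V : Set N) = (U : Set M))
      (hW' : (W : Set P) ⊆ (e.trans f).source)
      (hU' : (e.trans f) '' (W : Set P) = (U : Set M))
      (s : sect M U),
      pullD P N e he₁ he₂ W V hW hV (pullD N M f hf₁ hf₂ V U hV' hU s)
        = pullD P M (e.trans f) hef₁ hef₂ W U hW' hU' s
  pull_pullD : ∀ (N : Type) [TopologicalSpace N] [ChartedSpace (EuclideanSpace ℝ (Fin n)) N]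
      [IsManifold (𝓡 n) (⊤ : ℕ∞) N] [SecondCountableTopology N] [T2Space N]
      (M : Type) [TopologicalSpace M] [ChartedSpace (EuclideanSpace ℝ (Fin n)) M]
      [IsManifold (𝓡 n) (⊤ : ℕ∞) M] [SecondCountableTopology M] [T2Space M]
      (f : N → M) (hf : IsOpenSmoothEmbedding n f) (e : OpenPartialHomeomorph N M)
      (h₁ : ContMDiffOn (𝓡 n) (𝓡 n) (⊤ : ℕ∞) e e.source)
      (h₂ : ContMDiffOn (𝓡 n) (𝓡 n) (⊤ : ℕ∞) e.symm e.target)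
      (hef : EqOn f e e.source)
      (V : Opens N) (U : Opens M) (hV : (V : Set N) ⊆ e.source)
      (hU : e '' (V : Set N) = (U : Set M)) (s : sect M U),
      pullD N M e h₁ h₂ V U hV hU s
        = res N (fun x hx => by
            show f x ∈ (U : Set M)
            rw [← hU]
            exact ⟨x, hx, (hef (hV hx)).symm⟩)
          (pull N M f hf U s)
  locality : ∀ (M : Type) [TopologicalSpace M] [ChartedSpace (EuclideanSpace ℝ (Fin n)) M]
      [IsManifold (𝓡 n) (⊤ : ℕ∞) M] [SecondCountableTopology M] [T2Space M]
      {ι : Type} (U : ι → Opens M) (s t : sect M (⨆ i, U i)),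
      (∀ i, res M (le_iSup U i) s = res M (le_iSup U i) t) → s = t
  gluing : ∀ (M : Type) [TopologicalSpace M] [ChartedSpace (EuclideanSpace ℝ (Fin n)) M]
      [IsManifold (𝓡 n) (⊤ : ℕ∞) M] [SecondCountableTopology M] [T2Space M]
      {ι : Type} (U : ι → Opens M) (s : ∀ i, sect M (U i)),
      (∀ i j, res M (inf_le_left : U i ⊓ U j ≤ U i) (s i)
        = res M (inf_le_right : U i ⊓ U j ≤ U j) (s j)) →
      ∃ σ : sect M (⨆ i, U i), ∀ i, res M (le_iSup U i) σ = s i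

/-- A topological enhancement of a set-valued sheaf on smooth `n`-manifolds over `ℝⁿ`:
a topology on the set of sections over every open subset of `ℝⁿ` such that (a) restriction to a
smaller open subset is continuous, (b) pullback along every diffeomorphism between open subsets
of `ℝⁿ` is a homeomorphism, and (c) for every open cover the canonical injection into the
product of the spaces of local sections is a topological embedding. -/
structure TopEnhancement (n : ℕ) (Ψ : SetSheaf n) : Type 1 where
  τ : ∀ U : Opens (EuclideanSpace ℝ (Fin n)),
      TopologicalSpace (Ψ.sect (EuclideanSpace ℝ (Fin n)) U)
  continuous_res : ∀ {U V : Opens (EuclideanSpace ℝ (Fin n))} (h : V ≤ U),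
      @Continuous _ _ (τ U) (τ V) (Ψ.res _ h)
  isHomeomorph_pullD :
    ∀ (e : OpenPartialHomeomorph (EuclideanSpace ℝ (Fin n)) (EuclideanSpace ℝ (Fin n)))
      (h₁ : ContMDiffOn (𝓡 n) (𝓡 n) (⊤ : ℕ∞) e e.source)
      (h₂ : ContMDiffOn (𝓡 n) (𝓡 n) (⊤ : ℕ∞) e.symm e.target)
      (V U : Opens (EuclideanSpace ℝ (Fin n)))
      (hV : (V : Set (EuclideanSpace ℝ (Fin n))) ⊆ e.source)
      (hU : e '' (V : Set (EuclideanSpace ℝ (Fin n))) = (U : Set (EuclideanSpace ℝ (Fin n)))),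
      @IsHomeomorph _ _ (τ U) (τ V) (Ψ.pullD _ _ e h₁ h₂ V U hV hU)
  isEmbedding_cover : ∀ {ι : Type} (U : ι → Opens (EuclideanSpace ℝ (Fin n))),
      @Topology.IsEmbedding _ _ (τ (⨆ i, U i)) (@Pi.topologicalSpace ι _ (fun i => τ (U i)))
        (fun s i => Ψ.res _ (le_iSup U i) s)
/-- The affine-patch topology on the set of sections of `Ψ` over an open subset `U` of a smooth
`n`-manifold `M`, relative to a family of smooth diffeomorphisms `e i` from open subsets of `M`
contained in `U` onto open subsets of `ℝⁿ` (the affine patches): each set of sections over a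
patch `(e i).source` is topologised by transporting the given topology on the sections over the
open subset `(e i).target ⊆ ℝⁿ` along the bijection given by pullback along `e i`, and the
sections over `U` get the initial (subspace) topology induced by the canonical injection into
the product of the sections over the patches. -/
def patchTop (n : ℕ) (Ψ : SetSheaf n) (T : TopEnhancement n Ψ)
    (M : Type) [TopologicalSpace M] [ChartedSpace (EuclideanSpace ℝ (Fin n)) M]
    [IsManifold (𝓡 n) (⊤ : ℕ∞) M] [SecondCountableTopology M] [T2Space M]
    (U : Opens M) {ι : Type} (e : ι → OpenPartialHomeomorph M (EuclideanSpace ℝ (Fin n)))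
    (hsm : ∀ i, ContMDiffOn (𝓡 n) (𝓡 n) (⊤ : ℕ∞) (e i) (e i).source)
    (hsm' : ∀ i, ContMDiffOn (𝓡 n) (𝓡 n) (⊤ : ℕ∞) (e i).symm (e i).target)
    (hsub : ∀ i, (e i).source ⊆ (U : Set M)) :
    TopologicalSpace (Ψ.sect M U) :=
  TopologicalSpace.induced
    (fun s i => Ψ.res M
      (show (⟨(e i).source, (e i).open_source⟩ : Opens M) ≤ U from hsub i) s)
    (@Pi.topologicalSpace ι _ (fun i =>
      TopologicalSpace.coinduced
        (Ψ.pullD M (EuclideanSpace ℝ (Fin n)) (e i) (hsm i) (hsm' i)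
          ⟨(e i).source, (e i).open_source⟩ ⟨(e i).target, (e i).open_target⟩
          subset_rfl (e i).image_source_eq_target)
        (T.τ ⟨(e i).target, (e i).open_target⟩)))
open scoped Topology
section Aux

variable {n : ℕ}

lemma osem_id (M : Type) [TopologicalSpace M] [ChartedSpace (EuclideanSpace ℝ (Fin n)) M]
    [IsManifold (𝓡 n) (⊤ : ℕ∞) M] :
    IsOpenSmoothEmbedding n (id : M → M) :=
  ⟨fun _ _ h => h, by
    have h := (Diffeomorph.refl (𝓡 n) M (⊤ : ℕ∞)).isLocalDiffeomorph
    rwa [Diffeomorph.coe_refl] at h⟩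

lemma contMDiffOn_trans {N M P : Type}
    [TopologicalSpace N] [ChartedSpace (EuclideanSpace ℝ (Fin n)) N]
    [TopologicalSpace M] [ChartedSpace (EuclideanSpace ℝ (Fin n)) M]
    [TopologicalSpace P] [ChartedSpace (EuclideanSpace ℝ (Fin n)) P]
    (a : OpenPartialHomeomorph N M) (b : OpenPartialHomeomorph M P)
    (ha : ContMDiffOn (𝓡 n) (𝓡 n) (⊤ : ℕ∞) a a.source)
    (hb : ContMDiffOn (𝓡 n) (𝓡 n) (⊤ : ℕ∞) b b.source) :
    ContMDiffOn (𝓡 n) (𝓡 n) (⊤ : ℕ∞) (a.trans b) (a.trans b).source := by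
  rw [OpenPartialHomeomorph.coe_trans, OpenPartialHomeomorph.trans_source]
  exact hb.comp (ha.mono inter_subset_left) inter_subset_right

variable {N M : Type}
    [TopologicalSpace N] [ChartedSpace (EuclideanSpace ℝ (Fin n)) N]
    [IsManifold (𝓡 n) (⊤ : ℕ∞) N] [SecondCountableTopology N] [T2Space N]
    [TopologicalSpace M] [ChartedSpace (EuclideanSpace ℝ (Fin n)) M]
    [IsManifold (𝓡 n) (⊤ : ℕ∞) M] [SecondCountableTopology M] [T2Space M]

lemma pullD_left_inv (Ψ : SetSheaf n) (e : OpenPartialHomeomorph N M)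
    (h₁ : ContMDiffOn (𝓡 n) (𝓡 n) (⊤ : ℕ∞) e e.source)
    (h₂ : ContMDiffOn (𝓡 n) (𝓡 n) (⊤ : ℕ∞) e.symm e.target)
    (V : Opens N) (U : Opens M) (hV : (V : Set N) ⊆ e.source)
    (hU : e '' (V : Set N) = (U : Set M))
    (hUt : (U : Set M) ⊆ e.target) (hUV : e.symm '' (U : Set M) = (V : Set N))
    (s : Ψ.sect N V) :
    Ψ.pullD N M e h₁ h₂ V U hV hU (Ψ.pullD M N e.symm h₂ h₁ U V hUt hUV s) = s := by
  have hu₁ : ContMDiffOn (𝓡 n) (𝓡 n) (⊤ : ℕ∞) (e.trans e.symm) (e.trans e.symm).source :=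
    contMDiffOn_trans e e.symm h₁ h₂
  have hu₂ : ContMDiffOn (𝓡 n) (𝓡 n) (⊤ : ℕ∞) (e.trans e.symm).symm (e.trans e.symm).target :=
    contMDiffOn_trans e.symm.symm e.symm h₁ h₂
  have hVsrc : (V : Set N) ⊆ (e.trans e.symm).source := by
    rw [OpenPartialHomeomorph.trans_source]
    intro x hx
    refine ⟨hV hx, ?_⟩
    show e x ∈ e.symm.source
    rw [OpenPartialHomeomorph.symm_source]
    exact e.map_source (hV hx)
  have hVimg : (e.trans e.symm) '' (V : Set N) = (V : Set N) := by
    rw [OpenPartialHomeomorph.coe_trans, Set.image_comp, hU, hUV]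
  have hid : Set.EqOn (id : N → N) (e.trans e.symm) (e.trans e.symm).source := by
    intro x hx
    rw [OpenPartialHomeomorph.trans_source] at hx
    exact (e.left_inv hx.1).symm
  rw [Ψ.pullD_trans N M N e e.symm h₁ h₂ h₂ h₁ hu₁ hu₂ V U V hV hU hUt hUV hVsrc hVimg s,
    Ψ.pull_pullD N N id (osem_id N) (e.trans e.symm) hu₁ hu₂ hid V V hVsrc hVimg s,
    Ψ.pull_id N (osem_id N) V s]
  exact Ψ.res_id N V s

lemma pullD_right_inv (Ψ : SetSheaf n) (e : OpenPartialHomeomorph N M)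
    (h₁ : ContMDiffOn (𝓡 n) (𝓡 n) (⊤ : ℕ∞) e e.source)
    (h₂ : ContMDiffOn (𝓡 n) (𝓡 n) (⊤ : ℕ∞) e.symm e.target)
    (V : Opens N) (U : Opens M) (hV : (V : Set N) ⊆ e.source)
    (hU : e '' (V : Set N) = (U : Set M))
    (hUt : (U : Set M) ⊆ e.target) (hUV : e.symm '' (U : Set M) = (V : Set N))
    (s : Ψ.sect M U) :
    Ψ.pullD M N e.symm h₂ h₁ U V hUt hUV (Ψ.pullD N M e h₁ h₂ V U hV hU s) = s :=
  pullD_left_inv Ψ e.symm h₂ h₁ U V hUt hUV hV hU s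

lemma pullD_congr (Ψ : SetSheaf n) (e e₂ : OpenPartialHomeomorph N M)
    (h₁ : ContMDiffOn (𝓡 n) (𝓡 n) (⊤ : ℕ∞) e e.source)
    (h₂ : ContMDiffOn (𝓡 n) (𝓡 n) (⊤ : ℕ∞) e.symm e.target)
    (h₃ : ContMDiffOn (𝓡 n) (𝓡 n) (⊤ : ℕ∞) e₂ e₂.source)
    (h₄ : ContMDiffOn (𝓡 n) (𝓡 n) (⊤ : ℕ∞) e₂.symm e₂.target)
    (V : Opens N) (U : Opens M)
    (hV : (V : Set N) ⊆ e.source) (hU : e '' (V : Set N) = (U : Set M))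
    (hV₂ : (V : Set N) ⊆ e₂.source) (hU₂ : e₂ '' (V : Set N) = (U : Set M))
    (hid : Set.EqOn (id : M → M) (e.symm.trans e₂) (e.symm.trans e₂).source)
    (s : Ψ.sect M U) :
    Ψ.pullD N M e₂ h₃ h₄ V U hV₂ hU₂ s = Ψ.pullD N M e h₁ h₂ V U hV hU s := by
  have hUt : (U : Set M) ⊆ e.target := by
    rw [← hU]
    exact (Set.image_mono hV).trans e.image_source_eq_target.subset
  have hUV : e.symm '' (U : Set M) = (V : Set N) := by
    rw [← hU]
    exact e.toPartialEquiv.symm_image_image_of_subset_source hV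
  have hu₁ : ContMDiffOn (𝓡 n) (𝓡 n) (⊤ : ℕ∞) (e.symm.trans e₂) (e.symm.trans e₂).source :=
    contMDiffOn_trans e.symm e₂ h₂ h₃
  have hu₂ : ContMDiffOn (𝓡 n) (𝓡 n) (⊤ : ℕ∞) (e.symm.trans e₂).symm (e.symm.trans e₂).target :=
    contMDiffOn_trans e₂.symm e.symm.symm h₄ h₁
  have hUsrc : (U : Set M) ⊆ (e.symm.trans e₂).source := by
    rw [OpenPartialHomeomorph.trans_source]
    intro x hx
    refine ⟨hUt hx, ?_⟩
    show e.symm x ∈ e₂.source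
    exact hV₂ (hUV ▸ Set.mem_image_of_mem _ hx)
  have hUimg : (e.symm.trans e₂) '' (U : Set M) = (U : Set M) := by
    rw [OpenPartialHomeomorph.coe_trans, Set.image_comp, hUV, hU₂]
  have key : Ψ.pullD M N e.symm h₂ h₁ U V hUt hUV
      (Ψ.pullD N M e₂ h₃ h₄ V U hV₂ hU₂ s) = s := by
    rw [Ψ.pullD_trans M N M e.symm e₂ h₂ h₁ h₃ h₄ hu₁ hu₂ U V U hUt hUV hV₂ hU₂ hUsrc hUimg s,
      Ψ.pull_pullD M M id (osem_id M) (e.symm.trans e₂) hu₁ hu₂ hid U U hUsrc hUimg s,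
      Ψ.pull_id M (osem_id M) U s]
    exact Ψ.res_id M U s
  calc Ψ.pullD N M e₂ h₃ h₄ V U hV₂ hU₂ s
      = Ψ.pullD N M e h₁ h₂ V U hV hU
          (Ψ.pullD M N e.symm h₂ h₁ U V hUt hUV
            (Ψ.pullD N M e₂ h₃ h₄ V U hV₂ hU₂ s)) :=
        (pullD_left_inv Ψ e h₁ h₂ V U hV hU hUt hUV _).symm
    _ = Ψ.pullD N M e h₁ h₂ V U hV hU s := by rw [key]

lemma continuous_of_cover (Ψ : SetSheaf n) (T : TopEnhancement n Ψ) {X : Type}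
    (tX : TopologicalSpace X) {ι : Type} (W : ι → Opens (EuclideanSpace ℝ (Fin n)))
    (V : Opens (EuclideanSpace ℝ (Fin n))) (h : (⨆ i, W i) = V)
    (g : X → Ψ.sect (EuclideanSpace ℝ (Fin n)) V) (hle : ∀ i, W i ≤ V)
    (hg : ∀ i, Continuous[tX, T.τ (W i)]
      fun x => Ψ.res (EuclideanSpace ℝ (Fin n)) (hle i) (g x)) :
    Continuous[tX, T.τ V] g := by
  subst h
  letI := tX
  letI := T.τ (⨆ i, W i)
  letI : ∀ i, TopologicalSpace (Ψ.sect (EuclideanSpace ℝ (Fin n)) (W i)) := fun i => T.τ (W i)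
  rw [(T.isEmbedding_cover W).continuous_iff]
  exact continuous_pi fun i => hg i

theorem patchTop_le (n : ℕ) (Ψ : SetSheaf n) (T : TopEnhancement n Ψ)
    (M : Type) [TopologicalSpace M] [ChartedSpace (EuclideanSpace ℝ (Fin n)) M]
    [IsManifold (𝓡 n) (⊤ : ℕ∞) M] [SecondCountableTopology M] [T2Space M]
    {ι κ : Type}
    (e : ι → OpenPartialHomeomorph M (EuclideanSpace ℝ (Fin n)))
    (hsmₑ : ∀ i, ContMDiffOn (𝓡 n) (𝓡 n) (⊤ : ℕ∞) (e i) (e i).source)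
    (hsmₑ' : ∀ i, ContMDiffOn (𝓡 n) (𝓡 n) (⊤ : ℕ∞) (e i).symm (e i).target)
    (hcovₑ : (⋃ i, (e i).source) = univ)
    (f : κ → OpenPartialHomeomorph M (EuclideanSpace ℝ (Fin n)))
    (hsm_f : ∀ j, ContMDiffOn (𝓡 n) (𝓡 n) (⊤ : ℕ∞) (f j) (f j).source)
    (hsm_f' : ∀ j, ContMDiffOn (𝓡 n) (𝓡 n) (⊤ : ℕ∞) (f j).symm (f j).target) :
    patchTop n Ψ T M ⊤ e hsmₑ hsmₑ' (fun _ => subset_univ _)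
      ≤ patchTop n Ψ T M ⊤ f hsm_f hsm_f' (fun _ => subset_univ _) := by
  letI tE : TopologicalSpace (Ψ.sect M ⊤) :=
    patchTop n Ψ T M ⊤ e hsmₑ hsmₑ' (fun _ => subset_univ _)
  letI tF : ∀ j : κ, TopologicalSpace (Ψ.sect M ⟨(f j).source, (f j).open_source⟩) :=
    fun j => TopologicalSpace.coinduced (Ψ.pullD M (EuclideanSpace ℝ (Fin n)) (f j) (hsm_f j) (hsm_f' j) (⟨(f j).source, (f j).open_source⟩ : Opens M) (⟨(f j).target, (f j).open_target⟩ : Opens (EuclideanSpace ℝ (Fin n))) subset_rfl (f j).image_source_eq_target) (T.τ (⟨(f j).target, (f j).open_target⟩ : Opens (EuclideanSpace ℝ (Fin n))))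
  show patchTop n Ψ T M ⊤ e hsmₑ hsmₑ' (fun _ => subset_univ _) ≤
    TopologicalSpace.induced
      (fun s j => Ψ.res M
        (show (⟨(f j).source, (f j).open_source⟩ : Opens M) ≤ ⊤ from
          (fun _ => subset_univ _) j) s)
      (@Pi.topologicalSpace κ _ (fun j => TopologicalSpace.coinduced (Ψ.pullD M (EuclideanSpace ℝ (Fin n)) (f j) (hsm_f j) (hsm_f' j) (⟨(f j).source, (f j).open_source⟩ : Opens M) (⟨(f j).target, (f j).open_target⟩ : Opens (EuclideanSpace ℝ (Fin n))) subset_rfl (f j).image_source_eq_target) (T.τ (⟨(f j).target, (f j).open_target⟩ : Opens (EuclideanSpace ℝ (Fin n))))))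
  rw [← continuous_iff_le_induced]
  refine continuous_pi fun j => ?_
  -- replace the coinduced topology by the induced one along the inverse pullback
  have hψφ : ∀ t, (Ψ.pullD (EuclideanSpace ℝ (Fin n)) M (f j).symm (hsm_f' j) (hsm_f j) (⟨(f j).target, (f j).open_target⟩ : Opens (EuclideanSpace ℝ (Fin n))) (⟨(f j).source, (f j).open_source⟩ : Opens M) subset_rfl (f j).symm.image_source_eq_target) ((Ψ.pullD M (EuclideanSpace ℝ (Fin n)) (f j) (hsm_f j) (hsm_f' j) (⟨(f j).source, (f j).open_source⟩ : Opens M) (⟨(f j).target, (f j).open_target⟩ : Opens (EuclideanSpace ℝ (Fin n))) subset_rfl (f j).image_source_eq_target) t) = t := fun t =>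
    pullD_right_inv Ψ (f j) (hsm_f j) (hsm_f' j) _ _ subset_rfl
      (f j).image_source_eq_target subset_rfl (f j).symm.image_source_eq_target t
  have hφψ : ∀ s, (Ψ.pullD M (EuclideanSpace ℝ (Fin n)) (f j) (hsm_f j) (hsm_f' j) (⟨(f j).source, (f j).open_source⟩ : Opens M) (⟨(f j).target, (f j).open_target⟩ : Opens (EuclideanSpace ℝ (Fin n))) subset_rfl (f j).image_source_eq_target) ((Ψ.pullD (EuclideanSpace ℝ (Fin n)) M (f j).symm (hsm_f' j) (hsm_f j) (⟨(f j).target, (f j).open_target⟩ : Opens (EuclideanSpace ℝ (Fin n))) (⟨(f j).source, (f j).open_source⟩ : Opens M) subset_rfl (f j).symm.image_source_eq_target) s) = s := fun s =>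
    pullD_left_inv Ψ (f j) (hsm_f j) (hsm_f' j) _ _ subset_rfl
      (f j).image_source_eq_target subset_rfl (f j).symm.image_source_eq_target s
  have hco : TopologicalSpace.coinduced (Ψ.pullD M (EuclideanSpace ℝ (Fin n)) (f j) (hsm_f j) (hsm_f' j) (⟨(f j).source, (f j).open_source⟩ : Opens M) (⟨(f j).target, (f j).open_target⟩ : Opens (EuclideanSpace ℝ (Fin n))) subset_rfl (f j).image_source_eq_target) (T.τ (⟨(f j).target, (f j).open_target⟩ : Opens (EuclideanSpace ℝ (Fin n))))
      = TopologicalSpace.induced (Ψ.pullD (EuclideanSpace ℝ (Fin n)) M (f j).symm (hsm_f' j) (hsm_f j) (⟨(f j).target, (f j).open_target⟩ : Opens (EuclideanSpace ℝ (Fin n))) (⟨(f j).source, (f j).open_source⟩ : Opens M) subset_rfl (f j).symm.image_source_eq_target) (T.τ (⟨(f j).target, (f j).open_target⟩ : Opens (EuclideanSpace ℝ (Fin n)))) :=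
    (congrFun (Equiv.induced_symm ⟨_, _, hψφ, hφψ⟩) (T.τ (⟨(f j).target, (f j).open_target⟩ : Opens (EuclideanSpace ℝ (Fin n))))).symm
  have hcont : Continuous[tE, TopologicalSpace.induced (Ψ.pullD (EuclideanSpace ℝ (Fin n)) M (f j).symm (hsm_f' j) (hsm_f j) (⟨(f j).target, (f j).open_target⟩ : Opens (EuclideanSpace ℝ (Fin n))) (⟨(f j).source, (f j).open_source⟩ : Opens M) subset_rfl (f j).symm.image_source_eq_target) (T.τ (⟨(f j).target, (f j).open_target⟩ : Opens (EuclideanSpace ℝ (Fin n))))]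
      (fun s => Ψ.res M
        (show (⟨(f j).source, (f j).open_source⟩ : Opens M) ≤ ⊤ from
          (fun _ => subset_univ _) j) s) := by
    rw [continuous_induced_rng]
    -- cover the target of `f j` by the images of the intersections with the sources of `e`
    have hW : ∀ i : ι, IsOpen ((f j) '' ((f j).source ∩ (e i).source)) := fun i =>
      (f j).isOpen_image_of_subset_source
        ((f j).open_source.inter (e i).open_source) inter_subset_left
    have hcov : (⨆ i : ι, (⟨(f j) '' ((f j).source ∩ (e i).source), hW i⟩ : Opens (EuclideanSpace ℝ (Fin n)))) = (⟨(f j).target, (f j).open_target⟩ : Opens (EuclideanSpace ℝ (Fin n))) := by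
      apply Opens.ext
      rw [Opens.coe_iSup]
      show ⋃ i, (f j) '' ((f j).source ∩ (e i).source) = (f j).target
      rw [← image_iUnion, ← inter_iUnion, hcovₑ, inter_univ, (f j).image_source_eq_target]
    have hle : ∀ i : ι, (⟨(f j) '' ((f j).source ∩ (e i).source), hW i⟩ : Opens (EuclideanSpace ℝ (Fin n))) ≤ (⟨(f j).target, (f j).open_target⟩ : Opens (EuclideanSpace ℝ (Fin n))) := fun i => le_trans
      (le_iSup (fun i' => (⟨(f j) '' ((f j).source ∩ (e i').source), hW i'⟩ :
        Opens (EuclideanSpace ℝ (Fin n)))) i) (le_of_eq hcov)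
    refine continuous_of_cover Ψ T tE _ (⟨(f j).target, (f j).open_target⟩ : Opens (EuclideanSpace ℝ (Fin n))) hcov _ hle fun i => ?_
    have hAopen : IsOpen ((f j).source ∩ (e i).source) :=
      (f j).open_source.inter (e i).open_source
    have hBopen : IsOpen ((e i) '' ((f j).source ∩ (e i).source)) :=
      (e i).isOpen_image_of_subset_source hAopen inter_subset_right
    letI := T.τ (⟨(e i).target, (e i).open_target⟩ : Opens (EuclideanSpace ℝ (Fin n)))
    letI := T.τ (⟨(f j) '' ((f j).source ∩ (e i).source), hW i⟩ :
      Opens (EuclideanSpace ℝ (Fin n)))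
    letI := T.τ (⟨(e i) '' ((f j).source ∩ (e i).source), hBopen⟩ :
      Opens (EuclideanSpace ℝ (Fin n)))
    letI tEi : ∀ i' : ι, TopologicalSpace (Ψ.sect M ⟨(e i').source, (e i').open_source⟩) :=
      fun i' => TopologicalSpace.coinduced
        (Ψ.pullD M (EuclideanSpace ℝ (Fin n)) (e i') (hsmₑ i') (hsmₑ' i')
          (⟨(e i').source, (e i').open_source⟩ : Opens M)
          (⟨(e i').target, (e i').open_target⟩ : Opens (EuclideanSpace ℝ (Fin n)))
          subset_rfl (e i').image_source_eq_target)
        (T.τ (⟨(e i').target, (e i').open_target⟩ : Opens (EuclideanSpace ℝ (Fin n))))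
    have hWsub : ((f j) '' ((f j).source ∩ (e i).source) : Set _) ⊆ (f j).target := by
      rw [← (f j).image_source_eq_target]
      exact image_mono inter_subset_left
    have hBsub : ((e i) '' ((f j).source ∩ (e i).source) : Set _) ⊆ (e i).target := by
      rw [← (e i).image_source_eq_target]
      exact image_mono inter_subset_right
    have hWA : (f j).symm '' ((f j) '' ((f j).source ∩ (e i).source)) =
        (f j).source ∩ (e i).source :=
      (f j).toPartialEquiv.symm_image_image_of_subset_source inter_subset_left
    have hBA : (e i).symm '' ((e i) '' ((f j).source ∩ (e i).source)) =
        (f j).source ∩ (e i).source :=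
      (e i).toPartialEquiv.symm_image_image_of_subset_source inter_subset_right
    have hBle : (⟨(e i) '' ((f j).source ∩ (e i).source), hBopen⟩ : Opens (EuclideanSpace ℝ (Fin n))) ≤ (⟨(e i).target, (e i).open_target⟩ : Opens (EuclideanSpace ℝ (Fin n))) := hBsub
    have hc₁ := contMDiffOn_trans (f j).symm (e i) (hsm_f' j) (hsmₑ i)
    have hc₂ : ContMDiffOn (𝓡 n) (𝓡 n) (⊤ : ℕ∞) ((f j).symm.trans (e i)).symm ((f j).symm.trans (e i)).target :=
      contMDiffOn_trans (e i).symm (f j).symm.symm (hsmₑ' i) (hsm_f j)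
    have hL₁ := contMDiffOn_trans ((f j).symm.trans (e i)) (e i).symm hc₁ (hsmₑ' i)
    have hL₂ : ContMDiffOn (𝓡 n) (𝓡 n) (⊤ : ℕ∞) (((f j).symm.trans (e i)).trans (e i).symm).symm (((f j).symm.trans (e i)).trans (e i).symm).target :=
      contMDiffOn_trans (e i).symm.symm ((f j).symm.trans (e i)).symm (hsmₑ i) hc₂
    have hWc : ((f j) '' ((f j).source ∩ (e i).source) : Set _) ⊆ ((f j).symm.trans (e i)).source := by
      rw [OpenPartialHomeomorph.trans_source]
      rintro x ⟨a, ⟨haj, hai⟩, rfl⟩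
      refine ⟨?_, ?_⟩
      · show (f j) a ∈ (f j).symm.source
        rw [OpenPartialHomeomorph.symm_source]
        exact (f j).map_source haj
      · show (f j).symm ((f j) a) ∈ (e i).source
        rw [(f j).left_inv haj]
        exact hai
    have hBc : ((f j).symm.trans (e i)) '' ((f j) '' ((f j).source ∩ (e i).source)) =
        (e i) '' ((f j).source ∩ (e i).source) := by
      rw [OpenPartialHomeomorph.coe_trans, image_comp]
      rw [hWA]
    have hWL : ((f j) '' ((f j).source ∩ (e i).source) : Set _) ⊆ (((f j).symm.trans (e i)).trans (e i).symm).source := by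
      rw [OpenPartialHomeomorph.trans_source]
      intro x hx
      refine ⟨hWc hx, ?_⟩
      show ((f j).symm.trans (e i)) x ∈ (e i).symm.source
      rw [OpenPartialHomeomorph.symm_source]
      exact hBsub (hBc ▸ mem_image_of_mem _ hx)
    have hAL : (((f j).symm.trans (e i)).trans (e i).symm) '' ((f j) '' ((f j).source ∩ (e i).source)) =
        (f j).source ∩ (e i).source := by
      rw [OpenPartialHomeomorph.coe_trans, image_comp, hBc, hBA]
    have hid : Set.EqOn (id : M → M) ((f j).symm.symm.trans (((f j).symm.trans (e i)).trans (e i).symm))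
        ((f j).symm.symm.trans (((f j).symm.trans (e i)).trans (e i).symm)).source := by
      intro x hx
      rw [OpenPartialHomeomorph.trans_source] at hx
      obtain ⟨hx1, hx2⟩ := hx
      rw [mem_preimage, OpenPartialHomeomorph.trans_source] at hx2
      obtain ⟨hx2, _hx3⟩ := hx2
      rw [OpenPartialHomeomorph.trans_source, mem_inter_iff, mem_preimage] at hx2
      obtain ⟨_hx2a, hx2b⟩ := hx2
      have hx1' : x ∈ (f j).source := hx1
      have hxi : x ∈ (e i).source := by
        have h2 : (f j).symm ((f j) x) ∈ (e i).source := hx2b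
        rwa [(f j).left_inv hx1'] at h2
      show x = (e i).symm ((e i) ((f j).symm ((f j) x)))
      rw [(f j).left_inv hx1', (e i).left_inv hxi]
    have hstep : ∀ s : Ψ.sect M ⊤,
        Ψ.res (EuclideanSpace ℝ (Fin n)) (hle i) ((Ψ.pullD (EuclideanSpace ℝ (Fin n)) M (f j).symm (hsm_f' j) (hsm_f j) (⟨(f j).target, (f j).open_target⟩ : Opens (EuclideanSpace ℝ (Fin n))) (⟨(f j).source, (f j).open_source⟩ : Opens M) subset_rfl (f j).symm.image_source_eq_target) (Ψ.res M le_top s)) =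
        Ψ.pullD (EuclideanSpace ℝ (Fin n)) (EuclideanSpace ℝ (Fin n)) ((f j).symm.trans (e i)) hc₁ hc₂ (⟨(f j) '' ((f j).source ∩ (e i).source), hW i⟩ : Opens (EuclideanSpace ℝ (Fin n))) (⟨(e i) '' ((f j).source ∩ (e i).source), hBopen⟩ : Opens (EuclideanSpace ℝ (Fin n))) hWc hBc
          (Ψ.res (EuclideanSpace ℝ (Fin n)) hBle ((Ψ.pullD (EuclideanSpace ℝ (Fin n)) M (e i).symm (hsmₑ' i) (hsmₑ i) (⟨(e i).target, (e i).open_target⟩ : Opens (EuclideanSpace ℝ (Fin n))) (⟨(e i).source, (e i).open_source⟩ : Opens M) subset_rfl (e i).symm.image_source_eq_target) (Ψ.res M le_top s))) := by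
      intro s
      rw [Ψ.pullD_res (EuclideanSpace ℝ (Fin n)) M (f j).symm (hsm_f' j) (hsm_f j)
          (V' := (⟨(f j) '' ((f j).source ∩ (e i).source), hW i⟩ : Opens (EuclideanSpace ℝ (Fin n)))) (U' := (⟨(f j).source ∩ (e i).source, hAopen⟩ : Opens M)) subset_rfl hWsub
          (f j).symm.image_source_eq_target hWA (hle i) inter_subset_left,
        Ψ.pullD_res (EuclideanSpace ℝ (Fin n)) M (e i).symm (hsmₑ' i) (hsmₑ i)
          (V' := (⟨(e i) '' ((f j).source ∩ (e i).source), hBopen⟩ : Opens (EuclideanSpace ℝ (Fin n)))) (U' := (⟨(f j).source ∩ (e i).source, hAopen⟩ : Opens M)) subset_rfl hBsub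
          (e i).symm.image_source_eq_target hBA hBle inter_subset_right,
        Ψ.pullD_trans (EuclideanSpace ℝ (Fin n)) (EuclideanSpace ℝ (Fin n)) M ((f j).symm.trans (e i)) (e i).symm hc₁ hc₂ (hsmₑ' i) (hsmₑ i) hL₁ hL₂
          (⟨(f j) '' ((f j).source ∩ (e i).source), hW i⟩ : Opens (EuclideanSpace ℝ (Fin n))) (⟨(e i) '' ((f j).source ∩ (e i).source), hBopen⟩ : Opens (EuclideanSpace ℝ (Fin n))) (⟨(f j).source ∩ (e i).source, hAopen⟩ : Opens M) hWc hBc hBsub hBA hWL hAL,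
        pullD_congr Ψ (f j).symm (((f j).symm.trans (e i)).trans (e i).symm) (hsm_f' j) (hsm_f j) hL₁ hL₂
          (⟨(f j) '' ((f j).source ∩ (e i).source), hW i⟩ : Opens (EuclideanSpace ℝ (Fin n))) (⟨(f j).source ∩ (e i).source, hAopen⟩ : Opens M) hWsub hWA hWL hAL hid]
      congr 1
      exact (Ψ.res_comp M _ _ s).trans (Ψ.res_comp M _ _ s).symm
    have hFe : Continuous[tE, @Pi.topologicalSpace ι _
        (fun i => TopologicalSpace.coinduced (Ψ.pullD M (EuclideanSpace ℝ (Fin n)) (e i) (hsmₑ i) (hsmₑ' i) (⟨(e i).source, (e i).open_source⟩ : Opens M) (⟨(e i).target, (e i).open_target⟩ : Opens (EuclideanSpace ℝ (Fin n))) subset_rfl (e i).image_source_eq_target) (T.τ (⟨(e i).target, (e i).open_target⟩ : Opens (EuclideanSpace ℝ (Fin n)))))]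
        (fun s i => Ψ.res M
          (show (⟨(e i).source, (e i).open_source⟩ : Opens M) ≤ ⊤ from
            (fun _ => subset_univ _) i) s) :=
      continuous_induced_dom
    have hresi : Continuous[tE, TopologicalSpace.coinduced (Ψ.pullD M (EuclideanSpace ℝ (Fin n)) (e i) (hsmₑ i) (hsmₑ' i) (⟨(e i).source, (e i).open_source⟩ : Opens M) (⟨(e i).target, (e i).open_target⟩ : Opens (EuclideanSpace ℝ (Fin n))) subset_rfl (e i).image_source_eq_target) (T.τ (⟨(e i).target, (e i).open_target⟩ : Opens (EuclideanSpace ℝ (Fin n))))]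
        (fun s => Ψ.res M
          (show (⟨(e i).source, (e i).open_source⟩ : Opens M) ≤ ⊤ from
            (fun _ => subset_univ _) i) s) :=
      (continuous_apply i).comp hFe
    have h0 : Continuous[T.τ (⟨(e i).target, (e i).open_target⟩ : Opens (EuclideanSpace ℝ (Fin n))), T.τ (⟨(e i).target, (e i).open_target⟩ : Opens (EuclideanSpace ℝ (Fin n)))] ((Ψ.pullD (EuclideanSpace ℝ (Fin n)) M (e i).symm (hsmₑ' i) (hsmₑ i) (⟨(e i).target, (e i).open_target⟩ : Opens (EuclideanSpace ℝ (Fin n))) (⟨(e i).source, (e i).open_source⟩ : Opens M) subset_rfl (e i).symm.image_source_eq_target) ∘ (Ψ.pullD M (EuclideanSpace ℝ (Fin n)) (e i) (hsmₑ i) (hsmₑ' i) (⟨(e i).source, (e i).open_source⟩ : Opens M) (⟨(e i).target, (e i).open_target⟩ : Opens (EuclideanSpace ℝ (Fin n))) subset_rfl (e i).image_source_eq_target)) := by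
      have hcomp : (Ψ.pullD (EuclideanSpace ℝ (Fin n)) M (e i).symm (hsmₑ' i) (hsmₑ i) (⟨(e i).target, (e i).open_target⟩ : Opens (EuclideanSpace ℝ (Fin n))) (⟨(e i).source, (e i).open_source⟩ : Opens M) subset_rfl (e i).symm.image_source_eq_target) ∘ (Ψ.pullD M (EuclideanSpace ℝ (Fin n)) (e i) (hsmₑ i) (hsmₑ' i) (⟨(e i).source, (e i).open_source⟩ : Opens M) (⟨(e i).target, (e i).open_target⟩ : Opens (EuclideanSpace ℝ (Fin n))) subset_rfl (e i).image_source_eq_target) = id := funext fun t =>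
        pullD_right_inv Ψ (e i) (hsmₑ i) (hsmₑ' i) _ _ subset_rfl
          (e i).image_source_eq_target subset_rfl (e i).symm.image_source_eq_target t
      rw [hcomp]
      exact continuous_id
    have hψi : Continuous[TopologicalSpace.coinduced (Ψ.pullD M (EuclideanSpace ℝ (Fin n)) (e i) (hsmₑ i) (hsmₑ' i) (⟨(e i).source, (e i).open_source⟩ : Opens M) (⟨(e i).target, (e i).open_target⟩ : Opens (EuclideanSpace ℝ (Fin n))) subset_rfl (e i).image_source_eq_target) (T.τ (⟨(e i).target, (e i).open_target⟩ : Opens (EuclideanSpace ℝ (Fin n)))), T.τ (⟨(e i).target, (e i).open_target⟩ : Opens (EuclideanSpace ℝ (Fin n)))] (Ψ.pullD (EuclideanSpace ℝ (Fin n)) M (e i).symm (hsmₑ' i) (hsmₑ i) (⟨(e i).target, (e i).open_target⟩ : Opens (EuclideanSpace ℝ (Fin n))) (⟨(e i).source, (e i).open_source⟩ : Opens M) subset_rfl (e i).symm.image_source_eq_target) :=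
      continuous_coinduced_dom.mpr h0
    refine Continuous.congr ?_ fun s => (hstep s).symm
    exact ((T.isHomeomorph_pullD ((f j).symm.trans (e i)) hc₁ hc₂ (⟨(f j) '' ((f j).source ∩ (e i).source), hW i⟩ : Opens (EuclideanSpace ℝ (Fin n))) (⟨(e i) '' ((f j).source ∩ (e i).source), hBopen⟩ : Opens (EuclideanSpace ℝ (Fin n))) hWc hBc).continuous.comp
      ((T.continuous_res hBle).comp (hψi.comp hresi)))
  exact hco.symm ▸ hcont

end Aux

/-- **Lemma 3.4** (the topology on `Ψ(M)` is well defined).  Let `Ψ` be a set-valued sheaf on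
smooth `n`-manifolds with a topological enhancement over `ℝⁿ`, and let `M` be a smooth
`n`-manifold.  Given any two open covers of `M` by affine patches, each patch equipped with a
chosen diffeomorphism onto an open subset of `ℝⁿ`, the resulting affine-patch topologies on
`Ψ(M)` agree: the topology is independent both of the choice of cover of `M` by affine patches
and of the chosen diffeomorphisms. -/
theorem patch_topology_well_defined (n : ℕ) (Ψ : SetSheaf n) (T : TopEnhancement n Ψ)
    (M : Type) [TopologicalSpace M] [ChartedSpace (EuclideanSpace ℝ (Fin n)) M]
    [IsManifold (𝓡 n) (⊤ : ℕ∞) M] [SecondCountableTopology M] [T2Space M]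
    {ι κ : Type}
    (e : ι → OpenPartialHomeomorph M (EuclideanSpace ℝ (Fin n)))
    (hsmₑ : ∀ i, ContMDiffOn (𝓡 n) (𝓡 n) (⊤ : ℕ∞) (e i) (e i).source)
    (hsmₑ' : ∀ i, ContMDiffOn (𝓡 n) (𝓡 n) (⊤ : ℕ∞) (e i).symm (e i).target)
    (hcovₑ : (⋃ i, (e i).source) = univ)
    (f : κ → OpenPartialHomeomorph M (EuclideanSpace ℝ (Fin n)))
    (hsm_f : ∀ j, ContMDiffOn (𝓡 n) (𝓡 n) (⊤ : ℕ∞) (f j) (f j).source)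
    (hsm_f' : ∀ j, ContMDiffOn (𝓡 n) (𝓡 n) (⊤ : ℕ∞) (f j).symm (f j).target)
    (hcov_f : (⋃ j, (f j).source) = univ) :
    patchTop n Ψ T M ⊤ e hsmₑ hsmₑ' (fun _ => subset_univ _)
      = patchTop n Ψ T M ⊤ f hsm_f hsm_f' (fun _ => subset_univ _) := by
  exact le_antisymm
    (patchTop_le n Ψ T M e hsmₑ hsmₑ' hcovₑ f hsm_f hsm_f')
    (patchTop_le n Ψ T M f hsm_f hsm_f' hcov_f e hsmₑ hsmₑ')
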